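/- arXiv:2503.15240 — 2 statements merged into one kernel-verified Lean document; each statement's English description precedes it below -/
import Mathlib

section
/- Let p be an odd prime and G a finite powerful p-group. Then for every n ≥ 1, the (n+1)-fold nonabelian tensor product G^{⊗(n+1)} (defined iteratively via G^{⊗(n+1)} = G^{⊗ n} ⊗ G using the crossed module μ_n : G^{⊗ n} → G, μ_{n+1}(x ⊗ g) = [μ_n(x),g]) is a finite powerful p-group, and (G^{⊗ n})^p ⊗ G ≤ (G^{⊗(n+1)})^p. -/
/-- The subgroup generated by `k`-th powers of elements of `N`. -/
def sPow {G : Type*} [Group G] (N : Subgroup G) (k : ℕ) : Subgroup G :=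
  Subgroup.closure ((· ^ k) '' (N : Set G))


/-- A crossed module: a homomorphism `μ : M → G` with an action `φ` of `G` on `M`
by automorphisms satisfying the two crossed-module axioms. -/
structure IsCrossedModule {M G : Type*} [Group M] [Group G]
    (μ : M →* G) (φ : G →* MulAut M) : Prop where
  map_act : ∀ (g : G) (m : M), μ (φ g m) = g * μ m * g⁻¹
  peiffer : ∀ m m' : M, φ (μ m) m' = m * m' * m⁻¹

/-- The defining relations of the nonabelian tensor product `M ⊗ G` of a crossed
module `μ : M → G` (with `G` acting on `M` via `φ`, `M` acting on `G` via `μ` and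
conjugation, and `G` acting on itself by conjugation):
`mm' ⊗ g = (ᵐm' ⊗ ᵐg)(m ⊗ g)` and `m ⊗ gg' = (m ⊗ g)(ᵍm ⊗ ᵍg')`. -/
def tensorRels {M G : Type*} [Group M] [Group G] (μ : M →* G) (φ : G →* MulAut M) :
    Set (FreeGroup (M × G)) :=
  {r | ∃ m m' g, r = FreeGroup.of (m * m', g) *
      (FreeGroup.of (φ (μ m) m', μ m * g * (μ m)⁻¹) * FreeGroup.of (m, g))⁻¹} ∪
  {r | ∃ m g g', r = FreeGroup.of (m, g * g') *
      (FreeGroup.of (m, g) * FreeGroup.of (φ g m, g * g' * g⁻¹))⁻¹}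

/-- The nonabelian tensor product `M ⊗ G` of a crossed module. -/
abbrev NATensor {M G : Type*} [Group M] [Group G] (μ : M →* G) (φ : G →* MulAut M) :=
  PresentedGroup (tensorRels μ φ)

/-- The generator `m ⊗ g` of the nonabelian tensor product. -/
def natTprod {M G : Type*} [Group M] [Group G] (μ : M →* G) (φ : G →* MulAut M)
    (m : M) (g : G) : NATensor μ φ :=
  PresentedGroup.of (m, g)

open scoped commutatorElement

section Prelim

variable {G : Type*} [Group G]

theorem sPow_le {N : Subgroup G} {k : ℕ} {K : Subgroup G}
    (h : ∀ x ∈ N, x ^ k ∈ K) : sPow N k ≤ K := by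
  apply (Subgroup.closure_le K).mpr
  rintro _ ⟨x, hx, rfl⟩; exact h x hx

theorem mem_sPow_pow {N : Subgroup G} {k : ℕ} {x : G} (hx : x ∈ N) : x ^ k ∈ sPow N k :=
  Subgroup.subset_closure ⟨x, hx, rfl⟩

theorem sPow_map {H : Type*} [Group H] (f : G →* H) (N : Subgroup G) (k : ℕ) :
    (sPow N k).map f = sPow (N.map f) k := by
  rw [sPow, sPow, MonoidHom.map_closure]
  congr 1
  ext y; constructor
  · rintro ⟨_, ⟨x, hx, rfl⟩, rfl⟩
    exact ⟨f x, ⟨x, hx, rfl⟩, (map_pow f x k).symm⟩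
  · rintro ⟨_, ⟨x, hx, rfl⟩, rfl⟩
    exact ⟨x ^ k, ⟨x, hx, rfl⟩, map_pow f x k⟩

theorem sPow_top_aut {k : ℕ} (f : G ≃* G) {x : G} (hx : x ∈ sPow (⊤ : Subgroup G) k) :
    f x ∈ sPow (⊤ : Subgroup G) k := by
  have h1 : f x ∈ (sPow (⊤ : Subgroup G) k).map f.toMonoidHom :=
    ⟨x, hx, rfl⟩
  rwa [sPow_map, Subgroup.map_top_of_surjective _ f.surjective] at h1

theorem sPow_top_normal (k : ℕ) : (sPow (⊤ : Subgroup G) k).Normal := by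
  constructor
  intro x hx g
  simpa using sPow_top_aut (MulAut.conj g) hx

theorem sPow_top_mem_equiv {H : Type*} [Group H] (f : G ≃* H) {k : ℕ} {x : G} :
    f x ∈ sPow (⊤ : Subgroup H) k ↔ x ∈ sPow (⊤ : Subgroup G) k := by
  constructor
  · intro h
    have h1 : f.symm (f x) ∈ (sPow (⊤ : Subgroup H) k).map f.symm.toMonoidHom := ⟨f x, h, rfl⟩
    rw [MulEquiv.symm_apply_apply] at h1
    rwa [sPow_map, Subgroup.map_top_of_surjective _ f.symm.surjective] at h1
  · intro h
    have h1 : f x ∈ (sPow (⊤ : Subgroup G) k).map f.toMonoidHom := ⟨x, h, rfl⟩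
    rwa [sPow_map, Subgroup.map_top_of_surjective _ f.surjective] at h1

/-- Descent along the lower central series: in a nilpotent group, if
`N ≤ K ⊔ ⁅N, ⊤⁆` for normal subgroups `K`, `N`, then `N ≤ K`. -/
theorem descent_nilpotent {H : Type*} [Group H] [Group.IsNilpotent H]
    (K N : Subgroup H) (hK : K.Normal) (hN : N.Normal)
    (h : N ≤ K ⊔ ⁅N, (⊤ : Subgroup H)⁆) : N ≤ K := by
  let q := QuotientGroup.mk' K
  have hsurj : Function.Surjective q := QuotientGroup.mk'_surjective K
  have hqK : K.map q = ⊥ := by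
    rw [eq_bot_iff]
    rintro _ ⟨x, hx, rfl⟩
    simpa [q, QuotientGroup.eq_one_iff] using hx
  have key : N.map q ≤ ⁅N.map q, (⊤ : Subgroup (H ⧸ K))⁆ := by
    calc N.map q ≤ (K ⊔ ⁅N, (⊤ : Subgroup H)⁆).map q := Subgroup.map_mono h
    _ = K.map q ⊔ (⁅N, (⊤ : Subgroup H)⁆).map q := by rw [Subgroup.map_sup]
    _ = ⁅N.map q, (⊤ : Subgroup H).map q⁆ := by rw [hqK, Subgroup.map_commutator, bot_sup_eq]
    _ ≤ ⁅N.map q, (⊤ : Subgroup (H ⧸ K))⁆ := Subgroup.commutator_mono le_rfl le_top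
  have hlcs : ∀ n : ℕ, N.map q ≤ Subgroup.lowerCentralSeries (⊤ : Subgroup (H ⧸ K)) n := by
    intro n
    induction n with
    | zero => exact le_top
    | succ n ih =>
      calc N.map q ≤ ⁅N.map q, (⊤ : Subgroup (H ⧸ K))⁆ := key
      _ ≤ ⁅Subgroup.lowerCentralSeries (⊤ : Subgroup (H ⧸ K)) n, (⊤ : Subgroup (H ⧸ K))⁆ :=
          Subgroup.commutator_mono ih le_rfl
      _ = Subgroup.lowerCentralSeries (⊤ : Subgroup (H ⧸ K)) (n + 1) := (lowerCentralSeries_succ _ _).symm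
  obtain ⟨n, hn⟩ := nilpotent_iff_lowerCentralSeries.mp
    (nilpotent_of_surjective (G' := H ⧸ K) q hsurj)
  intro x hx
  have : q x ∈ N.map q := ⟨x, hx, rfl⟩
  have : q x = 1 := by
    have := (hn ▸ hlcs n) this
    simpa using this
  exact (QuotientGroup.eq_one_iff x).mp this

theorem pgroup_extension {p : ℕ} {H : Type*} [Group H] {K : Subgroup H} [K.Normal]
    (h1 : IsPGroup p K) (h2 : IsPGroup p (H ⧸ K)) : IsPGroup p H := by
  intro h
  obtain ⟨a, ha⟩ := h2 (QuotientGroup.mk h)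
  have hmem : h ^ p ^ a ∈ K := by
    rw [← QuotientGroup.eq_one_iff]
    simpa using ha
  obtain ⟨b, hb⟩ := h1 ⟨_, hmem⟩
  refine ⟨a + b, ?_⟩
  have := congrArg (Subtype.val) hb
  push_cast at this
  rw [pow_add, pow_mul]
  exact this

end Prelim

section FinInduction

universe u

theorem lcs_succ_comm {E : Type u} [Group E] (n : ℕ) :
    Subgroup.lowerCentralSeries (⊤ : Subgroup E) (n + 1) = ⁅Subgroup.lowerCentralSeries (⊤ : Subgroup E) n, (⊤ : Subgroup E)⁆ := by
  rw [Subgroup.commutator_def]; rfl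

theorem lcs_quotient_eq {E : Type u} [Group E] (Γ : Subgroup E) [Γ.Normal] (n : ℕ) :
    Subgroup.lowerCentralSeries (⊤ : Subgroup (E ⧸ Γ)) n = (Subgroup.lowerCentralSeries (⊤ : Subgroup E) n).map (QuotientGroup.mk' Γ) := by
  induction n with
  | zero =>
    rw [lowerCentralSeries_zero, lowerCentralSeries_zero,
      Subgroup.map_top_of_surjective _ (QuotientGroup.mk'_surjective Γ)]
  | succ n ih =>
    rw [lcs_succ_comm, lcs_succ_comm, Subgroup.map_commutator,
      Subgroup.map_top_of_surjective _ (QuotientGroup.mk'_surjective Γ), ih]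

theorem map_mk'_self_eq_bot {E : Type u} [Group E] (Γ : Subgroup E) [Γ.Normal] :
    Γ.map (QuotientGroup.mk' Γ) = ⊥ := by
  rw [eq_bot_iff]
  rintro _ ⟨x, hx, rfl⟩
  simpa [QuotientGroup.eq_one_iff] using hx

theorem fin_of_lcs_bot {p : ℕ} (hp : p.Prime) (c : ℕ) :
    ∀ (E : Type u) [inst : Group E], Group.FG E → Subgroup.lowerCentralSeries (⊤ : Subgroup E) c = ⊥ →
      IsPGroup p (Abelianization E) → Finite E ∧ IsPGroup p E := by
  haveI : Fact p.Prime := ⟨hp⟩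
  induction c with
  | zero =>
    intro E _ _ hlcs _
    rw [lowerCentralSeries_zero] at hlcs
    have hsub : ∀ x : E, x = 1 := by
      intro x
      have : x ∈ (⊥ : Subgroup E) := hlcs ▸ Subgroup.mem_top x
      simpa using this
    haveI : Subsingleton E := ⟨fun a b => by rw [hsub a, hsub b]⟩
    refine ⟨Finite.of_subsingleton, fun g => ⟨0, ?_⟩⟩
    rw [hsub g]; simp
  | succ c ih =>
    intro E _ hfg hlcs hab
    haveI : Group.FG E := hfg
    cases c with
    | zero =>
      -- abelian case
      have hcomm : ∀ a b : E, a * b = b * a := by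
        intro a b
        have h1 : ⁅a, b⁆ ∈ Subgroup.lowerCentralSeries (⊤ : Subgroup E) 1 := by
          rw [lowerCentralSeries_one]
          exact Subgroup.commutator_mem_commutator (Subgroup.mem_top a) (Subgroup.mem_top b)
        rw [hlcs] at h1
        exact commutatorElement_eq_one_iff_mul_comm.mp (by simpa using h1)
      have hPE : IsPGroup p E := by
        intro x
        obtain ⟨k, hk⟩ := hab (Abelianization.of x)
        refine ⟨k, ?_⟩
        have h1 : Abelianization.of (x ^ p ^ k) = 1 := by
          rw [map_pow]; exact hk
        have h2 : x ^ p ^ k ∈ commutator E := (QuotientGroup.eq_one_iff _).mp h1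
        rw [← lowerCentralSeries_one, hlcs] at h2
        simpa using h2
      letI : CommGroup E := { (inferInstance : Group E) with mul_comm := hcomm }
      have htor : Monoid.IsTorsion E := by
        intro x
        obtain ⟨k, hk⟩ := hPE x
        exact isOfFinOrder_iff_pow_eq_one.mpr ⟨p ^ k, pow_pos hp.pos k, hk⟩
      exact ⟨CommGroup.finite_of_fg_torsion E htor, hPE⟩
    | succ c' =>
      set Γ := Subgroup.lowerCentralSeries (⊤ : Subgroup E) (c' + 1) with hΓdef
      haveI hΓn : Γ.Normal := Subgroup.lowerCentralSeries_normal ⊤ (c' + 1)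
      have hcent : ∀ z ∈ Γ, ∀ x : E, ⁅z, x⁆ = 1 := by
        intro z hz x
        have h1 : ⁅z, x⁆ ∈ Subgroup.lowerCentralSeries (⊤ : Subgroup E) (c' + 1 + 1) := by
          rw [lcs_succ_comm]
          exact Subgroup.commutator_mem_commutator hz (Subgroup.mem_top x)
        rw [hlcs] at h1
        simpa using h1
      -- the quotient
      have hlcsQ : Subgroup.lowerCentralSeries (⊤ : Subgroup (E ⧸ Γ)) (c' + 1) = ⊥ := by
        rw [lcs_quotient_eq, ← hΓdef, map_mk'_self_eq_bot]
      have hfgQ : Group.FG (E ⧸ Γ) :=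
        Group.fg_of_surjective (QuotientGroup.mk'_surjective Γ)
      have habQ : IsPGroup p (Abelianization (E ⧸ Γ)) := by
        refine hab.of_surjective (Abelianization.map (QuotientGroup.mk' Γ)) ?_
        intro b
        obtain ⟨x, rfl⟩ : ∃ x : E ⧸ Γ, Abelianization.of x = b :=
          QuotientGroup.mk_surjective b
        obtain ⟨e, rfl⟩ := QuotientGroup.mk'_surjective Γ x
        exact ⟨Abelianization.of e, Abelianization.map_of _ _⟩
      obtain ⟨hfinQ, hpQ⟩ := ih (E ⧸ Γ) hfgQ hlcsQ habQ
      haveI := hfinQ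
      set N := Nat.card (E ⧸ Γ) with hNdef
      have hNpos : 0 < N := Nat.card_pos
      obtain ⟨K, hK⟩ := IsPGroup.iff_card.mp hpQ
      have hNpow : ∀ z : E, z ^ N ∈ Γ := by
        intro z
        have h1 : (QuotientGroup.mk' Γ) (z ^ N) = 1 := by
          rw [map_pow]
          exact pow_card_eq_one'
        exact (QuotientGroup.eq_one_iff _).mp h1
      have htorΓ : ∀ γ ∈ Γ, γ ^ N = 1 := by
        have main : ∀ γ ∈ ⁅Subgroup.lowerCentralSeries (⊤ : Subgroup E) c', (⊤ : Subgroup E)⁆, γ ^ N = 1 := by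
          intro γ hγ'
          rw [Subgroup.commutator_def] at hγ'
          induction hγ' using Subgroup.closure_induction with
          | mem x hx =>
            obtain ⟨z, hz, y, -, rfl⟩ := hx
            have key : ∀ k : ℕ, ⁅z ^ k, y⁆ = ⁅z, y⁆ ^ k := by
              intro k
              induction k with
              | zero => simp
              | succ k ihk =>
                have hsplit : ⁅z ^ k * z, y⁆ = z ^ k * ⁅z, y⁆ * (z ^ k)⁻¹ * ⁅z ^ k, y⁆ := by
                  simp only [commutatorElement_def]
                  group
                have hzyΓ : ⁅z, y⁆ ∈ Γ := by
                  rw [hΓdef, lcs_succ_comm]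
                  exact Subgroup.commutator_mem_commutator hz (Subgroup.mem_top y)
                have hcomm' : z ^ k * ⁅z, y⁆ * (z ^ k)⁻¹ = ⁅z, y⁆ := by
                  have := commutatorElement_eq_one_iff_mul_comm.mp (hcent _ hzyΓ (z ^ k))
                  rw [← this]; group
                rw [pow_succ, hsplit, hcomm', ihk, pow_succ]
                exact ((Commute.refl ⁅z, y⁆).pow_right k).eq
            have h2 : z ^ N ∈ Γ := hNpow z
            rw [← key N]
            exact hcent _ h2 y
          | one => simp
          | mul x y hx hy hpx hpy =>
            have hxΓ : x ∈ Γ := by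
              rw [hΓdef, lcs_succ_comm, Subgroup.commutator_def]
              exact hx
            have hcxy : Commute x y :=
              commutatorElement_eq_one_iff_mul_comm.mp (hcent x hxΓ y)
            rw [hcxy.mul_pow, hpx, hpy, mul_one]
          | inv x hx hpx =>
            rw [inv_pow, hpx, inv_one]
        intro γ hγ
        exact main γ (by rw [← lcs_succ_comm]; exact hγ)
      -- Γ is a finite p-group
      letI : CommGroup ↥Γ :=
        { (inferInstance : Group ↥Γ) with
          mul_comm := fun a b => Subtype.ext (by
            exact commutatorElement_eq_one_iff_mul_comm.mp (hcent a.1 a.2 b.1)) }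
      haveI : Γ.FiniteIndex := ⟨by
        have : Γ.index = N := rfl
        rw [this]; exact hNpos.ne'⟩
      haveI : Group.FG ↥Γ := Subgroup.fg_of_index_ne_zero Γ
      have htorΓ' : Monoid.IsTorsion ↥Γ := by
        intro γ
        refine isOfFinOrder_iff_pow_eq_one.mpr ⟨N, hNpos, ?_⟩
        ext
        push_cast
        exact htorΓ γ.1 γ.2
      have hfinΓ : Finite ↥Γ := CommGroup.finite_of_fg_torsion ↥Γ htorΓ'
      have hpΓ : IsPGroup p ↥Γ := by
        intro γ
        refine ⟨K, ?_⟩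
        ext
        push_cast
        rw [← hK, ← hNdef]
        exact htorΓ γ.1 γ.2
      have hfinE : Finite E :=
        Finite.of_equiv _ (Subgroup.groupEquivQuotientProdSubgroup (s := Γ)).symm
      exact ⟨hfinE, pgroup_extension hpΓ hpQ⟩

end FinInduction

section Core

variable {p : ℕ} {G : Type*} [Group G] {M : Type*} [Group M] {E : Type*} [Group E]

section CoreB

variable (hp : p.Prime)
  [Finite G] (hG : IsPGroup p G)
  [Finite M] (hM : IsPGroup p M)
  (μM : M →* G) (φM : G →* MulAut M)
  (hPM : ∀ m m' : M, φM (μM m) m' = m * m' * m⁻¹)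
  (κ : E →* G) (Φ : G →* MulAut E)
  (hPE : ∀ x y : E, Φ (κ x) y = x * y * x⁻¹)
  (τ : M → G → E)
  (R1 : ∀ m m' g, τ (m * m') g = τ (φM (μM m) m') (μM m * g * (μM m)⁻¹) * τ m g)
  (R2 : ∀ m g g', τ m (g * g') = τ m g * τ (φM g m) (g * g' * g⁻¹))
  (hgen : Subgroup.closure (Set.range fun mg : M × G => τ mg.1 mg.2) = ⊤)

include R1 in
theorem tau_one_left (g : G) : τ 1 g = 1 := by
  have h := R1 1 1 g
  simp only [mul_one, map_one, MulAut.one_apply, one_mul, inv_one] at h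
  have h2 : τ 1 g * 1 = τ 1 g * τ 1 g := by rw [mul_one]; exact h
  exact (mul_left_cancel h2).symm

include R2 R1 in
theorem tau_one_right (m : M) : τ m 1 = 1 := by
  have h := R2 m 1 1
  simp only [mul_one, map_one, MulAut.one_apply, one_mul, inv_one] at h
  have h2 : τ m 1 * 1 = τ m 1 * τ m 1 := by rw [mul_one]; exact h
  exact (mul_left_cancel h2).symm

-- finitely generated
include hgen in
theorem coreB_fg : Group.FG E := by
  rw [Group.fg_iff]
  exact ⟨Set.range fun mg : M × G => τ mg.1 mg.2, hgen, Set.finite_range _⟩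

-- nilpotent
include hPE in
theorem coreB_ker_le_center : κ.ker ≤ Subgroup.center E := by
  intro x hx
  rw [Subgroup.mem_center_iff]
  intro y
  have h := hPE x y
  rw [MonoidHom.mem_ker.mp hx] at h
  simp only [map_one, MulAut.one_apply] at h
  calc y * x = (x * y * x⁻¹) * x := by rw [← h]
  _ = x * y := by group

include hp hG hPE in
theorem coreB_nilpotent : Group.IsNilpotent E := by
  haveI : Fact p.Prime := ⟨hp⟩
  haveI := hG.isNilpotent
  exact isNilpotent_of_ker_le_center κ (coreB_ker_le_center κ Φ hPE)

end CoreB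

end Core
section CoreB2

variable {p : ℕ} {G : Type*} [Group G] {M : Type*} [Group M] {E : Type*} [Group E]

theorem coreB_ab_pgroup (hp : p.Prime)
    [Finite G] (hG : IsPGroup p G)
    [Finite M] (hM : IsPGroup p M)
    (μM : M →* G) (φM : G →* MulAut M)
    (hPM : ∀ m m' : M, φM (μM m) m' = m * m' * m⁻¹)
    (τ : M → G → E)
    (R1 : ∀ m m' g, τ (m * m') g = τ (φM (μM m) m') (μM m * g * (μM m)⁻¹) * τ m g)
    (R2 : ∀ m g g', τ m (g * g') = τ m g * τ (φM g m) (g * g' * g⁻¹))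
    (hgen : Subgroup.closure (Set.range fun mg : M × G => τ mg.1 mg.2) = ⊤) :
    IsPGroup p (Abelianization E) := by
  haveI : Fact p.Prime := ⟨hp⟩
  haveI : Fintype G := Fintype.ofFinite G
  classical
  obtain ⟨r, hr⟩ := IsPGroup.iff_card.mp hG
  obtain ⟨t, ht⟩ := IsPGroup.iff_card.mp hM
  set θ : M → G → Abelianization E := fun m g => Abelianization.of (τ m g) with hθdef
  have θrel1 : ∀ m m' g, θ (m * m') g
      = θ (φM (μM m) m') (μM m * g * (μM m)⁻¹) * θ m g := by
    intro m m' g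
    rw [hθdef]
    simp only
    rw [R1, map_mul]
  have θrel2 : ∀ m g g', θ m (g * g') = θ m g * θ (φM g m) (g * g' * g⁻¹) := by
    intro m g g'
    rw [hθdef]
    simp only
    rw [R2, map_mul]
  set σ : M → Abelianization E := fun m => ∏ h : G, θ m h with hσdef
  have hreindex : ∀ (m : M) (g : G), (∏ h : G, θ m (g * h * g⁻¹)) = σ m := by
    intro m g
    rw [hσdef]
    simp only
    exact Equiv.prod_comp (MulAut.conj g).toEquiv (fun h => θ m h)
  have hσmul : ∀ m m', σ (m * m') = σ (φM (μM m) m') * σ m := by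
    intro m m'
    calc σ (m * m') = ∏ h : G, (θ (φM (μM m) m') (μM m * h * (μM m)⁻¹) * θ m h) := by
          rw [hσdef]; exact Finset.prod_congr rfl fun h _ => θrel1 m m' h
    _ = (∏ h : G, θ (φM (μM m) m') (μM m * h * (μM m)⁻¹)) * ∏ h : G, θ m h :=
          Finset.prod_mul_distrib
    _ = σ (φM (μM m) m') * σ m := by rw [hreindex]
  have hσpow : ∀ (m : M) (k : ℕ), σ (m ^ k) = σ m ^ k := by
    intro m k
    induction k with
    | zero =>
      simp only [pow_zero]
      have h1 : ∀ h : G, θ 1 h = 1 := by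
        intro h
        rw [hθdef]
        simp only
        rw [tau_one_left μM φM τ R1 h, map_one]
      rw [hσdef]
      simp only
      rw [Finset.prod_congr rfl fun h _ => h1 h, Finset.prod_const_one]
    | succ k ihk =>
      have h1 : φM (μM m) (m ^ k) = m ^ k := by
        rw [map_pow, hPM]
        group
      rw [pow_succ', hσmul, h1, ihk, pow_succ']
      exact mul_comm _ _
  have hσtor : ∀ m : M, σ m ^ p ^ t = 1 := by
    intro m
    rw [← hσpow]
    have : m ^ p ^ t = 1 := by rw [← ht]; exact pow_card_eq_one'
    rw [this, ← pow_zero m, hσpow, pow_zero]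
  have hθkey : ∀ (m : M) (g : G), θ m g ^ p ^ r = σ m * (σ (φM g m))⁻¹ := by
    intro m g
    have h1 : σ m = ∏ h : G, θ m (g * h) := by
      rw [hσdef]
      simp only
      exact (Equiv.prod_comp (Equiv.mulLeft g) (fun h => θ m h)).symm
    have h2 : (∏ h : G, θ m (g * h))
        = (∏ _h : G, θ m g) * ∏ h : G, θ (φM g m) (g * h * g⁻¹) := by
      rw [← Finset.prod_mul_distrib]
      exact Finset.prod_congr rfl fun h _ => θrel2 m g h
    have h3 : (∏ _h : G, θ m g) = θ m g ^ p ^ r := by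
      rw [Finset.prod_const, Finset.card_univ, ← Nat.card_eq_fintype_card, hr]
    have h4 : σ m = θ m g ^ p ^ r * σ (φM g m) := by
      rw [h1, h2, h3, hreindex]
    rw [h4]
    group
  have hθtor : ∀ (m : M) (g : G), θ m g ^ p ^ (r + t) = 1 := by
    intro m g
    rw [pow_add, pow_mul, hθkey, mul_pow, inv_pow, hσtor, hσtor]
    simp
  -- the abelianization is generated by the θ's
  have hgenA : Subgroup.closure
      (Set.range fun mg : M × G => θ mg.1 mg.2) = ⊤ := by
    have h1 : (Set.range fun mg : M × G => θ mg.1 mg.2)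
        = Abelianization.of '' (Set.range fun mg : M × G => τ mg.1 mg.2) := by
      rw [← Set.range_comp]
      rfl
    rw [h1, ← MonoidHom.map_closure, hgen, Subgroup.map_top_of_surjective]
    exact fun b => QuotientGroup.mk_surjective b
  intro a
  refine ⟨r + t, ?_⟩
  have hker : (⊤ : Subgroup (Abelianization E)) ≤
      (powMonoidHom (p ^ (r + t)) : Abelianization E →* Abelianization E).ker := by
    rw [← hgenA, Subgroup.closure_le]
    rintro _ ⟨mg, rfl⟩
    rw [SetLike.mem_coe, MonoidHom.mem_ker, powMonoidHom_apply]
    exact hθtor mg.1 mg.2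
  have := hker (Subgroup.mem_top a)
  rwa [MonoidHom.mem_ker, powMonoidHom_apply] at this

end CoreB2


section Collect

variable {p : ℕ} {H : Type*} [Group H]

theorem pcollect (K N Eh : Subgroup H) [K.Normal] [N.Normal] [Eh.Normal]
    (hEh_N : ⁅(⊤ : Subgroup H), Eh⁆ ≤ N)
    (hpow : ∀ x ∈ Eh, x ^ p ∈ K) :
    (∀ (a z : H), z ∈ Eh → ⁅a ^ p, z⁆ ∈ K ⊔ ⁅N, (⊤ : Subgroup H)⁆) ∧
    (Odd p → ∀ (a z : H), z ∈ Eh → ∀ (X : ℕ → H), X 0 = 1 →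
      (∀ k, X (k + 1) = a * X k * a⁻¹ * z) → X p ∈ K ⊔ ⁅N, (⊤ : Subgroup H)⁆) := by
  set J := ⁅N, (⊤ : Subgroup H)⁆ with hJdef
  haveI hJn : J.Normal := Subgroup.commutator_normal N ⊤
  set T := K ⊔ J with hTdef
  let q := QuotientGroup.mk' J
  have hqker : ∀ x : H, q x = 1 → x ∈ J := fun x hx => (QuotientGroup.eq_one_iff x).mp hx
  have hcentral : ∀ n ∈ N, ∀ h : H, q n * q h = q h * q n := by
    intro n hn h
    have h1 : q ⁅n, h⁆ = 1 := (QuotientGroup.eq_one_iff _).mpr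
      (Subgroup.commutator_mem_commutator hn (Subgroup.mem_top h))
    rw [map_commutatorElement] at h1
    exact commutatorElement_eq_one_iff_mul_comm.mp h1
  have hmemT : ∀ (x y : H), y ∈ K → q x = q y → x ∈ T := by
    intro x y hy hq
    have h1 : q (x * y⁻¹) = 1 := by rw [map_mul, map_inv, hq]; group
    have h2 : x * y⁻¹ ∈ J := hqker _ h1
    have h3 : x = (x * y⁻¹) * y := by group
    rw [h3]
    exact Subgroup.mul_mem _ (Subgroup.mem_sup_right h2) (Subgroup.mem_sup_left hy)
  have hqconj : ∀ a x : H, q (a * x * a⁻¹) = q a * q x * (q a)⁻¹ := by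
    intro a x
    rw [map_mul, map_mul, map_inv]
  have hmach : ∀ (a z : H), z ∈ Eh →
      (z⁻¹ * a * z * a⁻¹ ∈ Eh ∧ z⁻¹ * a * z * a⁻¹ ∈ N ∧
        q a * q z * (q a)⁻¹ = q z * q (z⁻¹ * a * z * a⁻¹) ∧
        (∀ x : H, q (z⁻¹ * a * z * a⁻¹) * q x = q x * q (z⁻¹ * a * z * a⁻¹))) := by
    intro a z hz
    have hwEh : z⁻¹ * a * z * a⁻¹ ∈ Eh := by
      have h1 : a * z * a⁻¹ ∈ Eh := Subgroup.Normal.conj_mem ‹Eh.Normal› z hz a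
      have h2 : z⁻¹ * (a * z * a⁻¹) ∈ Eh := Subgroup.mul_mem _ (Subgroup.inv_mem _ hz) h1
      convert h2 using 1
      group
    have hwN : z⁻¹ * a * z * a⁻¹ ∈ N := by
      have h1 : ⁅z⁻¹, a⁆ ∈ ⁅Eh, (⊤ : Subgroup H)⁆ :=
        Subgroup.commutator_mem_commutator (Subgroup.inv_mem _ hz) (Subgroup.mem_top a)
      rw [Subgroup.commutator_comm] at h1
      have h2 : ⁅z⁻¹, a⁆ = z⁻¹ * a * z * a⁻¹ := by
        rw [commutatorElement_def]; group
      rw [← h2]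
      exact hEh_N h1
    refine ⟨hwEh, hwN, ?_, hcentral _ hwN⟩
    have h3 : a * z * a⁻¹ = z * (z⁻¹ * a * z * a⁻¹) := by group
    rw [← hqconj, h3, map_mul]
  constructor
  · -- commutator with p-th power
    intro a z hz
    obtain ⟨hwEh, hwN, hqz, hwcomm⟩ := hmach a z hz
    set w := z⁻¹ * a * z * a⁻¹ with hwdef
    have hconjw : ∀ i : ℕ, q a * q w ^ i * (q a)⁻¹ = q w ^ i := by
      intro i
      rw [← conj_pow]
      have h5 : q a * q w * (q a)⁻¹ = q w := by
        calc q a * q w * (q a)⁻¹ = q w * q a * (q a)⁻¹ := by rw [← hwcomm a]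
        _ = q w := by group
      rw [h5]
    have key : ∀ i : ℕ, q (a ^ i * z * (a ^ i)⁻¹) = q z * q w ^ i := by
      intro i
      induction i with
      | zero => simp
      | succ i ih =>
        have hsplit : a ^ (i + 1) * z * (a ^ (i + 1))⁻¹
            = a * (a ^ i * z * (a ^ i)⁻¹) * a⁻¹ := by
          rw [pow_succ']; group
        rw [hsplit, hqconj, ih]
        calc q a * (q z * q w ^ i) * (q a)⁻¹
            = (q a * q z * (q a)⁻¹) * (q a * q w ^ i * (q a)⁻¹) := by group
        _ = (q z * q w) * q w ^ i := by rw [hconjw, hqz]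
        _ = q z * q w ^ (i + 1) := by rw [pow_succ']; group
    have hcwz : Commute (q w) (q z) := hwcomm z
    have hqcomm : q ⁅a ^ p, z⁆ = q (w ^ p) := by
      have h6 : ⁅a ^ p, z⁆ = (a ^ p * z * (a ^ p)⁻¹) * z⁻¹ := commutatorElement_def _ _
      rw [h6, map_mul, key p, map_inv, map_pow]
      have h8 : Commute (q w ^ p) (q z) := hcwz.pow_left p
      calc q z * q w ^ p * (q z)⁻¹ = q z * (q w ^ p * (q z)⁻¹) := by group
      _ = q z * ((q z)⁻¹ * q w ^ p) := by rw [h8.inv_right.eq]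
      _ = q w ^ p := by group
    exact hmemT _ _ (hpow w hwEh) hqcomm
  · -- p-fold collection
    intro hodd a z hz X hX0 hXrec
    obtain ⟨hwEh, hwN, hqz, hwcomm⟩ := hmach a z hz
    set w := z⁻¹ * a * z * a⁻¹ with hwdef
    have hcommzw : Commute (q z) (q w) := (hwcomm z).symm
    have hconjw : ∀ i : ℕ, q a * q w ^ i * (q a)⁻¹ = q w ^ i := by
      intro i
      rw [← conj_pow]
      have h5 : q a * q w * (q a)⁻¹ = q w := by
        calc q a * q w * (q a)⁻¹ = q w * q a * (q a)⁻¹ := by rw [← hwcomm a]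
        _ = q w := by group
      rw [h5]
    have key : ∀ k : ℕ, ∃ e : ℕ, 2 * e = k * (k - 1) ∧ q (X k) = q z ^ k * q w ^ e := by
      intro k
      induction k with
      | zero => exact ⟨0, by simp, by rw [hX0]; simp⟩
      | succ k ih =>
        obtain ⟨e, he, hq⟩ := ih
        refine ⟨e + k, ?_, ?_⟩
        · cases k with
          | zero => simpa using he
          | succ k' =>
            have ha : (k' + 1 + 1) * (k' + 1 + 1 - 1) = (k' + 1) * (k' + 1 - 1) + 2 * (k' + 1) := by
              simp only [Nat.add_sub_cancel]
              ring
            omega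
        · rw [hXrec k, map_mul]
          have hstep : q (a * X k * a⁻¹) = (q z * q w) ^ k * q w ^ e := by
            have h9 : q (a * X k * a⁻¹) = q a * q (X k) * (q a)⁻¹ := hqconj a (X k)
            rw [h9, hq]
            calc q a * (q z ^ k * q w ^ e) * (q a)⁻¹
                = (q a * q z ^ k * (q a)⁻¹) * (q a * q w ^ e * (q a)⁻¹) := by group
            _ = (q a * q z * (q a)⁻¹) ^ k * q w ^ e := by rw [← conj_pow, hconjw]
            _ = (q z * q w) ^ k * q w ^ e := by rw [hqz]
          rw [hstep]
          calc (q z * q w) ^ k * q w ^ e * q z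
              = q z ^ k * q w ^ k * q w ^ e * q z := by rw [hcommzw.mul_pow]
          _ = q z ^ k * (q w ^ (k + e) * q z) := by rw [pow_add]; group
          _ = q z ^ k * (q z * q w ^ (k + e)) := by
              rw [(hcommzw.symm.pow_left (k + e)).eq]
          _ = q z ^ (k + 1) * q w ^ (e + k) := by
              rw [pow_succ, Nat.add_comm k e]
              group
    obtain ⟨e, he, hq⟩ := key p
    obtain ⟨s, hs⟩ := hodd
    have hes : e = s * p := by
      have h1 : p - 1 = 2 * s := by omega
      rw [h1] at he
      have h2 : p * (2 * s) = 2 * (s * p) := by ring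
      rw [h2] at he
      omega
    have hy : z ^ p * (w ^ s) ^ p ∈ K :=
      Subgroup.mul_mem _ (hpow z hz) (hpow (w ^ s) (Subgroup.pow_mem _ hwEh s))
    refine hmemT _ _ hy ?_
    have hfin : q (z ^ p * (w ^ s) ^ p) = q z ^ p * q w ^ e := by
      rw [map_mul, map_pow q z p, map_pow q (w ^ s) p, map_pow q w s, ← pow_mul, hes]
    rw [hq, hfin]

end Collect

section CoreStar

open SemidirectProduct

variable {p : ℕ} {G : Type*} [Group G] {M : Type*} [Group M] {E : Type*} [Group E]

theorem core_star (hp : p.Prime) (hodd : Odd p)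
    [Finite G] (hG : IsPGroup p G)
    (hGpow : ⁅(⊤ : Subgroup G), (⊤ : Subgroup G)⁆ ≤ sPow (⊤ : Subgroup G) p)
    [Finite M] (hM : IsPGroup p M)
    (μM : M →* G) (φM : G →* MulAut M)
    (hPM : ∀ m m' : M, φM (μM m) m' = m * m' * m⁻¹)
    (hAM : ∀ (g : G) (m : M), φM g m * m⁻¹ ∈ sPow (⊤ : Subgroup M) p)
    (κ : E →* G) (Φ : G →* MulAut E)
    (hPE : ∀ x y : E, Φ (κ x) y = x * y * x⁻¹)
    (τ : M → G → E)
    (R1 : ∀ m m' g, τ (m * m') g = τ (φM (μM m) m') (μM m * g * (μM m)⁻¹) * τ m g)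
    (R2 : ∀ m g g', τ m (g * g') = τ m g * τ (φM g m) (g * g' * g⁻¹))
    (hκτ : ∀ m g, κ (τ m g) = ⁅μM m, g⁆)
    (hΦτ : ∀ g m h, Φ g (τ m h) = τ (φM g m) (g * h * g⁻¹))
    (hgen : Subgroup.closure (Set.range fun mg : M × G => τ mg.1 mg.2) = ⊤)
    (hfinE : Finite E) (hpE : IsPGroup p E) :
    (∀ (g : G) (y : E), Φ g y * y⁻¹ ∈ sPow (⊤ : Subgroup E) p) ∧
    (∀ x ∈ sPow (⊤ : Subgroup M) p, ∀ g : G, τ x g ∈ sPow (⊤ : Subgroup E) p) := by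
  haveI : Fact p.Prime := ⟨hp⟩
  haveI := hfinE
  -- the semidirect product is a finite p-group, hence nilpotent
  have hEquiv : (E ⋊[Φ] G) ≃ E × G :=
    ⟨fun x => (x.left, x.right), fun z => ⟨z.1, z.2⟩,
      fun x => by cases x; rfl, fun z => by cases z; rfl⟩
  haveI hfinH : Finite (E ⋊[Φ] G) := Finite.of_equiv _ hEquiv.symm
  have hpH : IsPGroup p (E ⋊[Φ] G) := by
    obtain ⟨a, haE⟩ := IsPGroup.iff_card.mp hpE
    obtain ⟨b, hbG⟩ := IsPGroup.iff_card.mp hG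
    refine IsPGroup.iff_card.mpr ⟨a + b, ?_⟩
    rw [Nat.card_congr hEquiv, Nat.card_prod, haE, hbG, pow_add]
  haveI hnilH : Group.IsNilpotent (E ⋊[Φ] G) := hpH.isNilpotent
  -- subgroups
  set Eh : Subgroup (E ⋊[Φ] G) := (inl : E →* E ⋊[Φ] G).range with hEhdef
  haveI hEhn : Eh.Normal := by
    rw [hEhdef, range_inl_eq_ker_rightHom]
    infer_instance
  set K : Subgroup (E ⋊[Φ] G) := (sPow (⊤ : Subgroup E) p).map inl with hKdef
  have hKmem : ∀ z : E, (inl z : E ⋊[Φ] G) ∈ K ↔ z ∈ sPow (⊤ : Subgroup E) p := by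
    intro z
    constructor
    · rintro ⟨y, hy, hyz⟩
      rwa [← inl_injective hyz]
    · intro hz
      exact ⟨z, hz, rfl⟩
  haveI hKn : K.Normal := by
    constructor
    rintro _ ⟨z, hz, rfl⟩ h
    have h1 : (inl (h.left * Φ h.right z * h.left⁻¹) : E ⋊[Φ] G)
        = inl h.left * inl (Φ h.right z) * (inl h.left)⁻¹ := by
      rw [map_mul, map_mul, map_inv]
    have hconj : h * inl z * h⁻¹ = inl (h.left * Φ h.right z * h.left⁻¹) := by
      conv_lhs => rw [← inl_left_mul_inr_right h]
      rw [h1, inl_aut, map_inv]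
      group
    rw [hconj]
    refine ⟨h.left * Φ h.right z * h.left⁻¹, ?_, rfl⟩
    exact (sPow_top_normal p).conj_mem _ (sPow_top_aut (Φ h.right) hz) h.left
  set Nn : Subgroup (E ⋊[Φ] G) := K ⊔ ⁅(⊤ : Subgroup (E ⋊[Φ] G)), Eh⁆ with hNdef
  haveI hcn : (⁅(⊤ : Subgroup (E ⋊[Φ] G)), Eh⁆).Normal := Subgroup.commutator_normal ⊤ Eh
  haveI hNn_normal : Nn.Normal := Subgroup.sup_normal K _
  set T : Subgroup (E ⋊[Φ] G) := K ⊔ ⁅Nn, (⊤ : Subgroup (E ⋊[Φ] G))⁆ with hTdef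
  have hEh_N : ⁅(⊤ : Subgroup (E ⋊[Φ] G)), Eh⁆ ≤ Nn := le_sup_right
  have hpowK : ∀ x ∈ Eh, x ^ p ∈ K := by
    rintro _ ⟨z, rfl⟩
    rw [← map_pow]
    exact (hKmem _).mpr (mem_sPow_pow (Subgroup.mem_top z))
  obtain ⟨hC1, hFcol⟩ := pcollect K Nn Eh hEh_N hpowK
  have hF := hFcol hodd
  haveI hJn : (⁅Nn, (⊤ : Subgroup (E ⋊[Φ] G))⁆).Normal := Subgroup.commutator_normal Nn ⊤
  haveI hTn : T.Normal := Subgroup.sup_normal K _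
  -- stability of the first slot under the action
  have hstab : ∀ (g : G) (y : M), (∀ v : G, (inl (τ y v) : E ⋊[Φ] G) ∈ T) →
      ∀ v : G, (inl (τ (φM g y) v) : E ⋊[Φ] G) ∈ T := by
    intro g y hy v
    have h1 : τ (φM g y) v = Φ g (τ y (g⁻¹ * v * g)) := by
      rw [hΦτ]
      congr 1
      group
    have h2 : (inl (τ (φM g y) v) : E ⋊[Φ] G)
        = inr g * inl (τ y (g⁻¹ * v * g)) * (inr g)⁻¹ := by
      rw [h1, inl_aut, map_inv]
    rw [h2]
    exact hTn.conj_mem _ (hy _) _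
  -- p-th powers in the first slot
  have hFgen : ∀ (m : M) (v : G), (inl (τ (m ^ p) v) : E ⋊[Φ] G) ∈ T := by
    intro m v
    refine hF (inr (μM m)) (inl (τ m v)) ⟨τ m v, rfl⟩
      (fun k => inl (τ (m ^ k) v)) ?_ ?_
    · show (inl (τ (m ^ 0) v) : E ⋊[Φ] G) = 1
      rw [pow_zero, tau_one_left μM φM τ R1 v, map_one]
    · intro k
      show (inl (τ (m ^ (k+1)) v) : E ⋊[Φ] G)
          = inr (μM m) * (inl (τ (m ^ k) v) : E ⋊[Φ] G) * (inr (μM m) : E ⋊[Φ] G)⁻¹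
            * inl (τ m v)
      have h1 : τ (m ^ (k + 1)) v
          = τ (φM (μM m) (m ^ k)) (μM m * v * (μM m)⁻¹) * τ m v := by
        rw [pow_succ']
        exact R1 m (m ^ k) v
      have h2 : τ (φM (μM m) (m ^ k)) (μM m * v * (μM m)⁻¹) = Φ (μM m) (τ (m ^ k) v) :=
        (hΦτ (μM m) (m ^ k) v).symm
      rw [h1, h2, map_mul, inl_aut, map_inv]
  -- all elements of `sPow M p` in the first slot
  let C : Subgroup M :=
    { carrier := {x : M | ∀ v : G, (inl (τ x v) : E ⋊[Φ] G) ∈ T}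
      one_mem' := by
        intro v
        rw [tau_one_left μM φM τ R1 v, map_one]
        exact T.one_mem
      mul_mem' := by
        intro x y hx hy v
        rw [R1 x y v, map_mul]
        exact T.mul_mem (hstab (μM x) y hy _) (hx v)
      inv_mem' := by
        intro x hx v
        have h2 := R1 x x⁻¹ ((μM x)⁻¹ * v * μM x)
        have h3 : φM (μM x) x⁻¹ = x⁻¹ := by
          rw [map_inv, hPM]
          group
        have hg : μM x * ((μM x)⁻¹ * v * μM x) * (μM x)⁻¹ = v := by group
        rw [mul_inv_cancel, tau_one_left μM φM τ R1 _, h3, hg] at h2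
        have h4 : τ x⁻¹ v = (τ x ((μM x)⁻¹ * v * μM x))⁻¹ :=
          eq_inv_of_mul_eq_one_left h2.symm
        rw [h4, map_inv]
        exact T.inv_mem (hx _) }
  have hP1 : ∀ x ∈ sPow (⊤ : Subgroup M) p, ∀ v : G, (inl (τ x v) : E ⋊[Φ] G) ∈ T := by
    intro x hx v
    have hle : sPow (⊤ : Subgroup M) p ≤ C :=
      sPow_le (fun m _ => (fun v => hFgen m v : m ^ p ∈ C))
    exact hle hx v
  -- the image of κ consists of p-th powers
  have hκmem : ∀ x : E, κ x ∈ sPow (⊤ : Subgroup G) p := by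
    intro x
    have h1 : κ x ∈ (⊤ : Subgroup E).map κ := ⟨x, Subgroup.mem_top x, rfl⟩
    rw [← hgen, MonoidHom.map_closure] at h1
    have h2 : Subgroup.closure (κ '' (Set.range fun mg : M × G => τ mg.1 mg.2))
        ≤ sPow (⊤ : Subgroup G) p := by
      rw [Subgroup.closure_le]
      rintro _ ⟨_, ⟨mg, rfl⟩, rfl⟩
      rw [SetLike.mem_coe, hκτ]
      exact hGpow
        (Subgroup.commutator_mem_commutator (Subgroup.mem_top _) (Subgroup.mem_top _))
    exact h2 h1
  -- commutators of `inr` of p-th powers with `inl`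
  have hZ : ∀ c ∈ sPow (⊤ : Subgroup G) p, ∀ z : E, ⁅(inr c : E ⋊[Φ] G), (inl z : E ⋊[Φ] G)⁆ ∈ T := by
    let Z : Subgroup G :=
      { carrier := {c : G | ∀ z : E, ⁅(inr c : E ⋊[Φ] G), (inl z : E ⋊[Φ] G)⁆ ∈ T}
        one_mem' := by
          intro z
          have h1 : ⁅(inr (1 : G) : E ⋊[Φ] G), (inl z : E ⋊[Φ] G)⁆ = 1 := by
            rw [map_one]
            simp only [commutatorElement_def]
            group
          rw [h1]
          exact T.one_mem
        mul_mem' := by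
          intro c d hc hd z
          have hsplit : ⁅(inr (c * d) : E ⋊[Φ] G), (inl z : E ⋊[Φ] G)⁆
              = inr c * ⁅(inr d : E ⋊[Φ] G), (inl z : E ⋊[Φ] G)⁆ * (inr c)⁻¹
                * ⁅(inr c : E ⋊[Φ] G), (inl z : E ⋊[Φ] G)⁆ := by
            rw [map_mul]
            simp only [commutatorElement_def]
            group
          rw [hsplit]
          exact T.mul_mem (hTn.conj_mem _ (hd z) _) (hc z)
        inv_mem' := by
          intro c hc z
          have hsplit : ⁅(inr c⁻¹ : E ⋊[Φ] G), (inl z : E ⋊[Φ] G)⁆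
              = (inr c)⁻¹ * ⁅(inr c : E ⋊[Φ] G), (inl z : E ⋊[Φ] G)⁆⁻¹ * inr c := by
            rw [map_inv]
            simp only [commutatorElement_def]
            group
          rw [hsplit]
          have := hTn.conj_mem _ (T.inv_mem (hc z)) (inr c : E ⋊[Φ] G)⁻¹
          simpa using this }
    intro c hc z
    have hle : sPow (⊤ : Subgroup G) p ≤ Z := by
      refine sPow_le (fun a _ => ?_)
      intro z
      have h1 : (inr (a ^ p) : E ⋊[Φ] G) = (inr a : E ⋊[Φ] G) ^ p := map_pow _ _ _
      rw [h1]
      exact hC1 (inr a) (inl z) ⟨z, rfl⟩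
    exact hle hc z
  -- commutators of two `inl`s
  have hEcomm : ∀ (x z : E), ⁅(inl x : E ⋊[Φ] G), (inl z : E ⋊[Φ] G)⁆ ∈ T := by
    intro x z
    have h1 : ⁅x, z⁆ = Φ (κ x) z * z⁻¹ := by
      rw [hPE, commutatorElement_def]
    have h2 : ⁅(inl x : E ⋊[Φ] G), (inl z : E ⋊[Φ] G)⁆ = ⁅(inr (κ x) : E ⋊[Φ] G), (inl z : E ⋊[Φ] G)⁆ := by
      rw [← map_commutatorElement, h1, map_mul, map_inv, inl_aut, map_inv]
      simp only [commutatorElement_def]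
    rw [h2]
    exact hZ (κ x) (hκmem x) z
  -- the main commutator computation
  have hGcase : ∀ (z : E), z ∈ (⊤ : Subgroup E) →
      ∀ (g : G), ⁅(inr g : E ⋊[Φ] G), (inl z : E ⋊[Φ] G)⁆ ∈ T := by
    have hYgen : ∀ (m : M) (h : G) (g : G), ⁅(inr g : E ⋊[Φ] G), (inl (τ m h) : E ⋊[Φ] G)⁆ ∈ T := by
      intro m h g
      have hXid : Φ g (τ m h) = (τ m g)⁻¹ * (τ m h * τ (φM h m) g) := by
        have hi : τ m (g * h) = τ m g * Φ g (τ m h) := by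
          rw [R2 m g h, hΦτ]
        have hii : τ m (g * h) = τ m h * τ (φM h m) g := by
          have h3 := R2 m h (h⁻¹ * g * h)
          have h4 : h * (h⁻¹ * g * h) = g * h := by group
          have h5 : h * (h⁻¹ * g * h) * h⁻¹ = g := by group
          rw [h5, h4] at h3
          exact h3
        rw [hii] at hi
        rw [hi]
        group
      set d := m⁻¹ * φM h m with hddef
      have hdmem : d ∈ sPow (⊤ : Subgroup M) p := by
        have h6 : φM h m * m⁻¹ ∈ sPow (⊤ : Subgroup M) p := hAM h m
        have h7 : m⁻¹ * (φM h m * m⁻¹) * (m⁻¹)⁻¹ ∈ sPow (⊤ : Subgroup M) p :=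
          (sPow_top_normal p).conj_mem _ h6 m⁻¹
        convert h7 using 1
        rw [hddef]
        group
      have hφhm : φM h m = m * d := by rw [hddef]; group
      have hexp : τ (φM h m) g = τ (φM (μM m) d) (μM m * g * (μM m)⁻¹) * τ m g := by
        rw [hφhm]
        exact R1 m d g
      have hcommu : ⁅(inr g : E ⋊[Φ] G), (inl (τ m h) : E ⋊[Φ] G)⁆
          = inl (Φ g (τ m h) * (τ m h)⁻¹) := by
        rw [map_mul, map_inv, inl_aut, map_inv, commutatorElement_def]
      have hform : Φ g (τ m h) * (τ m h)⁻¹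
          = (τ m g)⁻¹ * (τ m h * τ (φM (μM m) d) (μM m * g * (μM m)⁻¹) * (τ m h)⁻¹)
            * (τ m g)
            * ((τ m g)⁻¹ * τ m h * τ m g * (τ m h)⁻¹) := by
        rw [hXid, hexp]
        group
      have hu : (inl (τ (φM (μM m) d) (μM m * g * (μM m)⁻¹)) : E ⋊[Φ] G) ∈ T :=
        hP1 _ (sPow_top_aut (φM (μM m)) hdmem) _
      have hfirst : (inl ((τ m g)⁻¹
          * (τ m h * τ (φM (μM m) d) (μM m * g * (μM m)⁻¹) * (τ m h)⁻¹)
          * (τ m g)) : E ⋊[Φ] G) ∈ T := by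
        rw [map_mul, map_mul, map_mul, map_mul, map_inv, map_inv]
        have hc1 := hTn.conj_mem _ hu (inl (τ m h))
        have hc2 := hTn.conj_mem _ hc1 ((inl (τ m g) : E ⋊[Φ] G))⁻¹
        convert hc2 using 1
        group
      have hsecond : (inl ((τ m g)⁻¹ * τ m h * τ m g * (τ m h)⁻¹) : E ⋊[Φ] G) ∈ T := by
        have h8 : (τ m g)⁻¹ * τ m h * τ m g * (τ m h)⁻¹ = ⁅(τ m g)⁻¹, τ m h⁆ := by
          rw [commutatorElement_def]
          group
        rw [h8, map_commutatorElement]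
        exact hEcomm _ _
      rw [hcommu, hform, map_mul]
      exact T.mul_mem hfirst hsecond
    intro z hz g
    have hle : (⊤ : Subgroup E) ≤
        { carrier := {z : E | ∀ g : G, ⁅(inr g : E ⋊[Φ] G), (inl z : E ⋊[Φ] G)⁆ ∈ T}
          one_mem' := by
            intro g
            have h1 : ⁅(inr g : E ⋊[Φ] G), (inl (1 : E) : E ⋊[Φ] G)⁆ = 1 := by
              rw [map_one]
              simp only [commutatorElement_def]
              group
            rw [h1]
            exact T.one_mem
          mul_mem' := by
            intro y₁ y₂ h1 h2 g
            have hsplit : ⁅(inr g : E ⋊[Φ] G), (inl (y₁ * y₂) : E ⋊[Φ] G)⁆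
                = ⁅(inr g : E ⋊[Φ] G), (inl y₁ : E ⋊[Φ] G)⁆
                  * (inl y₁ * ⁅(inr g : E ⋊[Φ] G), (inl y₂ : E ⋊[Φ] G)⁆ * (inl y₁)⁻¹) := by
              rw [map_mul]
              simp only [commutatorElement_def]
              group
            rw [hsplit]
            exact T.mul_mem (h1 g) (hTn.conj_mem _ (h2 g) _)
          inv_mem' := by
            intro y hy g
            have hsplit : ⁅(inr g : E ⋊[Φ] G), (inl y⁻¹ : E ⋊[Φ] G)⁆
                = (inl y)⁻¹ * ⁅(inr g : E ⋊[Φ] G), (inl y : E ⋊[Φ] G)⁆⁻¹ * inl y := by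
              rw [map_inv]
              simp only [commutatorElement_def]
              group
            rw [hsplit]
            have := hTn.conj_mem _ (T.inv_mem (hy g)) ((inl y : E ⋊[Φ] G))⁻¹
            simpa using this } := by
      rw [← hgen, Subgroup.closure_le]
      rintro _ ⟨mg, rfl⟩
      intro g
      exact hYgen mg.1 mg.2 g
    exact hle hz g
  -- all commutators with Eh lie in T
  have hMaster : ⁅(⊤ : Subgroup (E ⋊[Φ] G)), Eh⁆ ≤ T := by
    rw [Subgroup.commutator_le]
    rintro h - _ ⟨z, rfl⟩
    have hsplit : ⁅h, (inl z : E ⋊[Φ] G)⁆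
        = inl h.left * ⁅(inr h.right : E ⋊[Φ] G), (inl z : E ⋊[Φ] G)⁆ * (inl h.left)⁻¹
          * ⁅(inl h.left : E ⋊[Φ] G), (inl z : E ⋊[Φ] G)⁆ := by
      conv_lhs => rw [← inl_left_mul_inr_right h]
      simp only [commutatorElement_def]
      group
    rw [hsplit]
    exact T.mul_mem (hTn.conj_mem _ (hGcase z (Subgroup.mem_top z) h.right) _)
      (hEcomm h.left z)
  have hNleT : Nn ≤ T := by
    rw [hNdef]
    exact sup_le le_sup_left hMaster
  have hNK : Nn ≤ K := descent_nilpotent K Nn hKn hNn_normal hNleT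
  have hTK : T ≤ K := by
    rw [hTdef]
    refine sup_le le_rfl ?_
    calc ⁅Nn, (⊤ : Subgroup (E ⋊[Φ] G))⁆ ≤ ⁅K, (⊤ : Subgroup (E ⋊[Φ] G))⁆ :=
        Subgroup.commutator_mono hNK le_rfl
    _ ≤ K := by
        rw [Subgroup.commutator_le]
        intro k hk x _
        have h10 : ⁅k, x⁆ = k * (x * k⁻¹ * x⁻¹) := by
          rw [commutatorElement_def]
          group
        rw [h10]
        refine K.mul_mem hk ?_
        have := hKn.conj_mem _ (K.inv_mem hk) x
        simpa using this
  constructor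
  · intro g y
    have h12 : (inl (Φ g y * y⁻¹) : E ⋊[Φ] G) = ⁅(inr g : E ⋊[Φ] G), (inl y : E ⋊[Φ] G)⁆ := by
      rw [map_mul, map_inv, commutatorElement_def, inl_aut, map_inv]
    have h11 : (inl (Φ g y * y⁻¹) : E ⋊[Φ] G) ∈ K := by
      rw [h12]
      exact hNK (Subgroup.mem_sup_right
        (Subgroup.commutator_mem_commutator (Subgroup.mem_top _) ⟨y, rfl⟩))
    exact (hKmem _).mp h11
  · intro x hx g
    exact (hKmem _).mp (hTK (hP1 x hx g))

end CoreStar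

section CoreMain

variable {p : ℕ} {G : Type*} [Group G] {M : Type*} [Group M] {E : Type*} [Group E]

theorem core_main (hp : p.Prime) (hodd : Odd p)
    [Finite G] (hG : IsPGroup p G)
    (hGpow : ⁅(⊤ : Subgroup G), (⊤ : Subgroup G)⁆ ≤ sPow (⊤ : Subgroup G) p)
    [Finite M] (hM : IsPGroup p M)
    (μM : M →* G) (φM : G →* MulAut M)
    (hPM : ∀ m m' : M, φM (μM m) m' = m * m' * m⁻¹)
    (hAM : ∀ (g : G) (m : M), φM g m * m⁻¹ ∈ sPow (⊤ : Subgroup M) p)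
    (κ : E →* G) (Φ : G →* MulAut E)
    (hPE : ∀ x y : E, Φ (κ x) y = x * y * x⁻¹)
    (τ : M → G → E)
    (R1 : ∀ m m' g, τ (m * m') g = τ (φM (μM m) m') (μM m * g * (μM m)⁻¹) * τ m g)
    (R2 : ∀ m g g', τ m (g * g') = τ m g * τ (φM g m) (g * g' * g⁻¹))
    (hκτ : ∀ m g, κ (τ m g) = ⁅μM m, g⁆)
    (hΦτ : ∀ g m h, Φ g (τ m h) = τ (φM g m) (g * h * g⁻¹))
    (hgen : Subgroup.closure (Set.range fun mg : M × G => τ mg.1 mg.2) = ⊤) :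
    Finite E ∧ IsPGroup p E ∧
      (∀ (g : G) (y : E), Φ g y * y⁻¹ ∈ sPow (⊤ : Subgroup E) p) ∧
      (∀ x ∈ sPow (⊤ : Subgroup M) p, ∀ g : G, τ x g ∈ sPow (⊤ : Subgroup E) p) := by
  have hfg : Group.FG E := coreB_fg τ hgen
  have hnil : Group.IsNilpotent E := coreB_nilpotent hp hG κ Φ hPE
  obtain ⟨c, hc⟩ := nilpotent_iff_lowerCentralSeries.mp hnil
  have hab : IsPGroup p (Abelianization E) :=
    coreB_ab_pgroup hp hG hM μM φM hPM τ R1 R2 hgen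
  obtain ⟨hfin, hpE⟩ := fin_of_lcs_bot hp c E hfg hc hab
  obtain ⟨h1, h2⟩ := core_star hp hodd hG hGpow hM μM φM hPM hAM κ Φ hPE τ R1 R2 hκτ hΦτ
    hgen hfin hpE
  exact ⟨hfin, hpE, h1, h2⟩

end CoreMain

section Tensor

variable {M G : Type*} [Group M] [Group G]

theorem NAT_rel1 (μ : M →* G) (φ : G →* MulAut M) (m m' : M) (g : G) :
    natTprod μ φ (m * m') g
      = natTprod μ φ (φ (μ m) m') (μ m * g * (μ m)⁻¹) * natTprod μ φ m g := by
  have hrel : (FreeGroup.of (m * m', g) *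
      (FreeGroup.of (φ (μ m) m', μ m * g * (μ m)⁻¹) * FreeGroup.of (m, g))⁻¹)
      ∈ tensorRels μ φ := Or.inl ⟨m, m', g, rfl⟩
  have h1 : (QuotientGroup.mk (FreeGroup.of (m * m', g) *
      (FreeGroup.of (φ (μ m) m', μ m * g * (μ m)⁻¹) * FreeGroup.of (m, g))⁻¹)
      : NATensor μ φ) = 1 :=
    (QuotientGroup.eq_one_iff _).mpr (Subgroup.subset_normalClosure hrel)
  rw [QuotientGroup.mk_mul, QuotientGroup.mk_inv, QuotientGroup.mk_mul] at h1
  exact mul_inv_eq_one.mp h1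

theorem NAT_rel2 (μ : M →* G) (φ : G →* MulAut M) (m : M) (g g' : G) :
    natTprod μ φ m (g * g')
      = natTprod μ φ m g * natTprod μ φ (φ g m) (g * g' * g⁻¹) := by
  have hrel : (FreeGroup.of (m, g * g') *
      (FreeGroup.of (m, g) * FreeGroup.of (φ g m, g * g' * g⁻¹))⁻¹)
      ∈ tensorRels μ φ := Or.inr ⟨m, g, g', rfl⟩
  have h1 : (QuotientGroup.mk (FreeGroup.of (m, g * g') *
      (FreeGroup.of (m, g) * FreeGroup.of (φ g m, g * g' * g⁻¹))⁻¹)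
      : NATensor μ φ) = 1 :=
    (QuotientGroup.eq_one_iff _).mpr (Subgroup.subset_normalClosure hrel)
  rw [QuotientGroup.mk_mul, QuotientGroup.mk_inv, QuotientGroup.mk_mul] at h1
  exact mul_inv_eq_one.mp h1

theorem NAT_gen (μ : M →* G) (φ : G →* MulAut M) :
    Subgroup.closure (Set.range fun mg : M × G => natTprod μ φ mg.1 mg.2) = ⊤ := by
  have h1 : (fun mg : M × G => natTprod μ φ mg.1 mg.2)
      = fun mg : M × G => (PresentedGroup.of (rels := tensorRels μ φ) mg) := by
    funext mg
    rfl
  rw [h1]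
  exact PresentedGroup.closure_range_of _

end Tensor

/-- The iterated nonabelian tensor products `G^{⊗(n+1)} = G^{⊗ n} ⊗ G` of a finite
powerful `p`-group (`p` odd) are finite powerful `p`-groups, and
`(G^{⊗ n})^p ⊗ G ≤ (G^{⊗(n+1)})^p` for all `n ≥ 1`.  The tower is presented by a
family `T` with `T n = G^{⊗(n+1)}`, so `T 0 ≃ G`, together with crossed modules
`μ n : T n → G` (actions `φ n`) and isomorphisms `e n : T (n+1) ≃* (T n) ⊗ G`,
under which `μ (n+1) (x ⊗ g) = [μ n x, g]` and `ᵍ(x ⊗ h) = ᵍx ⊗ ᵍh`. -/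
theorem stmt_15 {p : ℕ} (hp : p.Prime) (hodd : Odd p)
    {G : Type*} [Group G] [Finite G] (hG : IsPGroup p G)
    (hGpow : ⁅(⊤ : Subgroup G), (⊤ : Subgroup G)⁆ ≤ sPow (⊤ : Subgroup G) p)
    (T : ℕ → Type*) [∀ n, Group (T n)]
    (μ : ∀ n, T n →* G) (φ : ∀ n, G →* MulAut (T n))
    (hcm : ∀ n, IsCrossedModule (μ n) (φ n))
    (e0 : T 0 ≃* G) (he0 : ∀ x, μ 0 x = e0 x)
    (hφ0 : ∀ g x, φ 0 g x = e0.symm (g * e0 x * g⁻¹))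
    (e : ∀ n, T (n + 1) ≃* NATensor (μ n) (φ n))
    (hμ : ∀ n x g, μ (n + 1) ((e n).symm (natTprod (μ n) (φ n) x g)) = ⁅μ n x, g⁆)
    (hφ : ∀ n g x h, φ (n + 1) g ((e n).symm (natTprod (μ n) (φ n) x h)) =
        (e n).symm (natTprod (μ n) (φ n) (φ n g x) (g * h * g⁻¹))) :
    ∀ n : ℕ,
      (Finite (T (n + 1)) ∧ IsPGroup p (T (n + 1)) ∧
        ⁅(⊤ : Subgroup (T (n + 1))), (⊤ : Subgroup (T (n + 1)))⁆ ≤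
          sPow (⊤ : Subgroup (T (n + 1))) p) ∧
      Subgroup.closure {y : T (n + 1) | ∃ x g, x ∈ sPow (⊤ : Subgroup (T n)) p ∧
          y = (e n).symm (natTprod (μ n) (φ n) x g)} ≤
        sPow (⊤ : Subgroup (T (n + 1))) p := by
  -- the package carried through the induction
  let Pkg : ℕ → Prop := fun n => Finite (T n) ∧ IsPGroup p (T n) ∧
    ∀ (g : G) (x : T n), φ n g x * x⁻¹ ∈ sPow (⊤ : Subgroup (T n)) p
  -- base case
  have base : Pkg 0 := by
    refine ⟨Finite.of_equiv G e0.symm.toEquiv, hG.of_equiv e0.symm, ?_⟩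
    intro g x
    rw [← sPow_top_mem_equiv e0]
    have h1 : e0 (φ 0 g x * x⁻¹) = (g * e0 x * g⁻¹) * (e0 x)⁻¹ := by
      rw [map_mul, map_inv, hφ0, MulEquiv.apply_symm_apply]
    rw [h1]
    have h2 : (g * e0 x * g⁻¹) * (e0 x)⁻¹ = ⁅g, e0 x⁆ := by
      rw [commutatorElement_def]
    rw [h2]
    exact hGpow (Subgroup.commutator_mem_commutator (Subgroup.mem_top _) (Subgroup.mem_top _))
  -- inductive step, producing both the package and the statement
  have step : ∀ n : ℕ, Pkg n →
      (Finite (T (n + 1)) ∧ IsPGroup p (T (n + 1)) ∧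
        (∀ (g : G) (y : T (n + 1)), φ (n + 1) g y * y⁻¹ ∈ sPow (⊤ : Subgroup (T (n + 1))) p) ∧
        (∀ x ∈ sPow (⊤ : Subgroup (T n)) p, ∀ g : G,
          (e n).symm (natTprod (μ n) (φ n) x g) ∈ sPow (⊤ : Subgroup (T (n + 1))) p)) := by
    intro n hpkg
    obtain ⟨hfinM, hpM, hAM⟩ := hpkg
    haveI := hfinM
    set τ' : T n → G → T (n + 1) :=
      fun x g => (e n).symm (natTprod (μ n) (φ n) x g) with hτdef
    have R1' : ∀ m m' g, τ' (m * m') g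
        = τ' (φ n (μ n m) m') (μ n m * g * (μ n m)⁻¹) * τ' m g := by
      intro m m' g
      rw [hτdef]
      simp only
      rw [NAT_rel1 (μ n) (φ n) m m' g, map_mul]
    have R2' : ∀ m g g', τ' m (g * g') = τ' m g * τ' (φ n g m) (g * g' * g⁻¹) := by
      intro m g g'
      rw [hτdef]
      simp only
      rw [NAT_rel2 (μ n) (φ n) m g g', map_mul]
    have hgen' : Subgroup.closure (Set.range fun mg : T n × G => τ' mg.1 mg.2) = ⊤ := by
      have h1 : (Set.range fun mg : T n × G => τ' mg.1 mg.2)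
          = ⇑((e n).symm.toMonoidHom)
            '' (Set.range fun mg : T n × G => natTprod (μ n) (φ n) mg.1 mg.2) := by
        rw [← Set.range_comp]
        rfl
      rw [h1, ← MonoidHom.map_closure ((e n).symm.toMonoidHom), NAT_gen]
      refine Subgroup.map_top_of_surjective _ ?_
      exact (e n).symm.surjective
    have hAM' : ∀ (g : G) (m : T n), φ n g m * m⁻¹ ∈ sPow (⊤ : Subgroup (T n)) p := hAM
    obtain ⟨hfinE, hpE, hstar, hclause⟩ :=
      core_main hp hodd hG hGpow hpM (μ n) (φ n) (hcm n).peiffer hAM'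
        (μ (n + 1)) (φ (n + 1)) (fun x y => (hcm (n + 1)).peiffer x y)
        τ' R1' R2' (hμ n) (hφ n) hgen'
    exact ⟨hfinE, hpE, hstar, hclause⟩
  have pkg : ∀ n, Pkg n := by
    intro n
    induction n with
    | zero => exact base
    | succ n ih =>
      obtain ⟨h1, h2, h3, _⟩ := step n ih
      exact ⟨h1, h2, h3⟩
  intro n
  obtain ⟨hfin, hpE, hstar, hclause⟩ := step n (pkg n)
  refine ⟨⟨hfin, hpE, ?_⟩, ?_⟩
  · rw [Subgroup.commutator_le]
    intro x _ y _
    have h1 : ⁅x, y⁆ = φ (n + 1) (μ (n + 1) x) y * y⁻¹ := by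
      rw [(hcm (n + 1)).peiffer x y, commutatorElement_def]
    rw [h1]
    exact hstar _ y
  · rw [Subgroup.closure_le]
    rintro y ⟨x, g, hx, rfl⟩
    exact hclause x hx g
end

section
/- Let G be a group, N a normal subgroup of Z_n(G) with exponent p (every element satisfies x^p = 1), and define λ_i(G) = γ_1(G)^{p^{i-1}} γ_2(G)^{p^{i-2}} ⋯ γ_i(G). Then for all 1 ≤ i ≤ n, [λ_i(G), N, G, …, G] = 1 where G appears n−i times; in particular [N, G, …, G] = 1 with n copies of G. -/
/-- Iterated commutator `[A, G, …, G]` with `k` copies of `G`. -/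
def itCom {G : Type*} [Group G] (A : Subgroup G) : ℕ → Subgroup G
  | 0 => A
  | k + 1 => ⁅itCom A k, (⊤ : Subgroup G)⁆

/-- The `i`-th term of the lower `p`-series,
`λ_i(G) = γ_1(G)^{p^{i-1}} γ_2(G)^{p^{i-2}} ⋯ γ_i(G)`. -/
def lam (p : ℕ) (G : Type*) [Group G] (i : ℕ) : Subgroup G :=
  ⨆ j ∈ Finset.Icc 1 i, sPow (Subgroup.lowerCentralSeries (⊤ : Subgroup G) (j - 1)) (p ^ (i - j))

open scoped commutatorElement

section Aux

variable {G : Type*} [Group G]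

lemma ucsNormal (G : Type*) [Group G] (n : ℕ) : (upperCentralSeries G n).Normal :=
  show (Subgroup.upperCentralSeries G n).Normal from inferInstance

private lemma comm_mul (g h k : G) : ⁅g * h, k⁆ = g * ⁅h, k⁆ * g⁻¹ * ⁅g, k⁆ := by group

private lemma comm_inv (g k : G) : ⁅g⁻¹, k⁆ = g⁻¹ * ⁅k, g⁆ * g := by group

private lemma hall_witt (x y z : G) :
    ⁅z, ⁅x, y⁆⁆ =
      x * (z * ⁅y, ⁅z⁻¹, x⁻¹⁆⁆⁻¹ * z⁻¹) * (y * ⁅x⁻¹, ⁅y⁻¹, z⁆⁆⁻¹ * y⁻¹) * x⁻¹ := by group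

/-- The set of `g` whose commutators with all of `N` land in a normal subgroup `W`
is a subgroup. -/
def commInto (N W : Subgroup G) (hW : W.Normal) : Subgroup G where
  carrier := {g | ∀ a ∈ N, ⁅g, a⁆ ∈ W}
  one_mem' := by
    intro a _
    simpa using W.one_mem
  mul_mem' := by
    intro g h hg hh a ha
    rw [comm_mul]
    exact W.mul_mem (hW.conj_mem _ (hh a ha) g) (hg a ha)
  inv_mem' := by
    intro g hg a ha
    rw [comm_inv]
    simpa using hW.conj_mem _ (by simpa using W.inv_mem (hg a ha)) g⁻¹

lemma mem_commInto {N W : Subgroup G} {hW : W.Normal} {g : G} :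
    g ∈ commInto N W hW ↔ ∀ a ∈ N, ⁅g, a⁆ ∈ W := Iff.rfl

/-- Commutation with `Z_m` lands in `Z_{m-1}`. -/
lemma ucs_comm {m : ℕ} {x : G} (hx : x ∈ upperCentralSeries G m) (g : G) :
    ⁅x, g⁆ ∈ upperCentralSeries G (m - 1) := by
  cases m with
  | zero =>
    rw [show upperCentralSeries G 0 = ⊥ from rfl, Subgroup.mem_bot] at hx
    simp [hx]
  | succ m =>
    exact (mem_upperCentralSeries_succ_iff.mp hx) g

lemma ucs_comm' {m : ℕ} {x : G} (hx : x ∈ upperCentralSeries G m) (g : G) :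
    ⁅g, x⁆ ∈ upperCentralSeries G (m - 1) := by
  have := (upperCentralSeries G (m - 1)).inv_mem (ucs_comm hx g)
  simpa using this

/-- `[γ_{j+1}(G), Z_m(G)] ≤ Z_{m-j-1}(G)`, elementwise. -/
lemma lcs_ucs_comm :
    ∀ j : ℕ, ∀ x ∈ Subgroup.lowerCentralSeries (⊤ : Subgroup G) j, ∀ m : ℕ, ∀ a ∈ upperCentralSeries G m,
      ⁅x, a⁆ ∈ upperCentralSeries G (m - (j + 1)) := by
  intro j
  induction j with
  | zero =>
    intro x _ m a ha
    exact ucs_comm' ha x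
  | succ j ih =>
    have key : Subgroup.lowerCentralSeries (⊤ : Subgroup G) (j + 1) ≤
        ⨅ m : ℕ, commInto (upperCentralSeries G m)
          (upperCentralSeries G (m - (j + 2))) (ucsNormal G _) := by
      rw [Subgroup.lowerCentralSeries_succ]
      apply (Subgroup.closure_le _).mpr
      rintro _ ⟨y, hy, g, -, rfl⟩
      rw [SetLike.mem_coe]
      rw [Subgroup.mem_iInf]
      intro m
      rw [mem_commInto]
      intro a ha
      -- show ⁅⁅y,g⁆, a⁆ ∈ Z_{m - (j+2)}
      set W := upperCentralSeries G (m - (j + 2)) with hWdef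
      have hW : W.Normal := ucsNormal G _
      have h1 : ⁅a, ⁅y, g⁆⁆ ∈ W := by
        rw [hall_witt y g a]
        -- term 1 : ⁅g, ⁅a⁻¹, y⁻¹⁆⁆⁻¹
        have hb : ⁅a⁻¹, y⁻¹⁆ ∈ upperCentralSeries G (m - (j + 1)) := by
          have := ih y⁻¹ ((Subgroup.lowerCentralSeries (⊤ : Subgroup G) j).inv_mem hy) m a⁻¹
            ((upperCentralSeries G m).inv_mem ha)
          have := (upperCentralSeries G (m - (j + 1))).inv_mem this
          simpa using this
        have ht1 : ⁅g, ⁅a⁻¹, y⁻¹⁆⁆⁻¹ ∈ W := by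
          apply W.inv_mem
          have := ucs_comm' hb g
          have hle : upperCentralSeries G (m - (j + 1) - 1) ≤ W := by
            apply upperCentralSeries_mono
            omega
          exact hle this
        -- term 2 : ⁅y⁻¹, ⁅g⁻¹, a⁆⁆⁻¹
        have hc : ⁅g⁻¹, a⁆ ∈ upperCentralSeries G (m - 1) := by
          have := (upperCentralSeries G (m - 1)).inv_mem (ucs_comm ha g⁻¹)
          simpa using this
        have ht2 : ⁅y⁻¹, ⁅g⁻¹, a⁆⁆⁻¹ ∈ W := by
          apply W.inv_mem
          have := ih y⁻¹ ((Subgroup.lowerCentralSeries (⊤ : Subgroup G) j).inv_mem hy) (m - 1) _ hc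
          have hle : upperCentralSeries G (m - 1 - (j + 1)) ≤ W := by
            apply upperCentralSeries_mono
            omega
          exact hle this
        have hfin := hW.conj_mem _ (W.mul_mem (hW.conj_mem _ ht1 a) (hW.conj_mem _ ht2 g)) y
        simpa [mul_assoc] using hfin
      have := W.inv_mem h1
      simpa using this
    intro x hx m a ha
    have hx' := key hx
    rw [Subgroup.mem_iInf] at hx'
    exact (hx' m) a ha

/-- In any group, if `⁅y,a⁆` is central then `⁅y^t, a⁆ = ⁅y,a⁆^t`. -/
lemma comm_pow_central {H : Type*} [Group H] (y a : H)
    (h : ∀ g : H, Commute ⁅y, a⁆ g) (t : ℕ) : ⁅y ^ t, a⁆ = ⁅y, a⁆ ^ t := by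
  induction t with
  | zero => simp
  | succ t ih =>
    rw [pow_succ, comm_mul, ih]
    have h1 : y ^ t * ⁅y, a⁆ * (y ^ t)⁻¹ = ⁅y, a⁆ := by
      rw [← (h (y ^ t)).eq]
      group
    rw [h1, ← pow_succ']

lemma comm_pow_central' {H : Type*} [Group H] (y a : H)
    (h : ∀ g : H, Commute ⁅y, a⁆ g) (t : ℕ) : ⁅y, a ^ t⁆ = ⁅y, a⁆ ^ t := by
  have hcen : ∀ g : H, Commute ⁅a, y⁆ g := by
    intro g
    have : ⁅a, y⁆ = ⁅y, a⁆⁻¹ := by rw [commutatorElement_inv]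
    rw [this]
    exact (h g).inv_left
  have h2 := comm_pow_central a y hcen t
  calc ⁅y, a ^ t⁆ = ⁅a ^ t, y⁆⁻¹ := by rw [commutatorElement_inv]
    _ = (⁅a, y⁆ ^ t)⁻¹ := by rw [h2]
    _ = (⁅y, a⁆⁻¹ ^ t)⁻¹ := by rw [commutatorElement_inv]
    _ = ⁅y, a⁆ ^ t := by rw [inv_pow, inv_inv]

/-- The power lemma: for `x ∈ γ_{j+1}(G)`, `a ∈ N` (with `N ≤ Z_n(G)` of exponent `p`),
`⁅x^{p^k}, a⁆ ∈ Z_{n-(j+1)-k}(G)`. -/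
lemma pow_comm_lemma {p : ℕ} (n : ℕ) (N : Subgroup G)
    (hNZ : N ≤ upperCentralSeries G n) (hexp : ∀ x ∈ N, x ^ p = 1) :
    ∀ k j : ℕ, ∀ x ∈ Subgroup.lowerCentralSeries (⊤ : Subgroup G) j, ∀ a ∈ N,
      ⁅x ^ p ^ k, a⁆ ∈ upperCentralSeries G (n - (j + 1) - k) := by
  intro k
  induction k with
  | zero =>
    intro j x hx a ha
    simpa using lcs_ucs_comm j x hx n a (hNZ ha)
  | succ k ih =>
    intro j x hx a ha
    set y := x ^ p ^ k with hy
    have hyp : x ^ p ^ (k + 1) = y ^ p := by rw [hy, ← pow_mul, ← pow_succ]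
    rw [hyp]
    have hc : ⁅y, a⁆ ∈ upperCentralSeries G (n - (j + 1) - k) := ih j x hx a ha
    cases hm : n - (j + 1) - k with
    | zero =>
      rw [hm, show upperCentralSeries G 0 = ⊥ from rfl, Subgroup.mem_bot] at hc
      have hcom : Commute y a := commutatorElement_eq_one_iff_mul_comm.mp hc
      have : ⁅y ^ p, a⁆ = 1 := commutatorElement_eq_one_iff_mul_comm.mpr (hcom.pow_left p).eq
      rw [this]
      exact Subgroup.one_mem _
    | succ m' =>
      rw [hm] at hc
      -- work in G ⧸ Z_{m'}
      set W := upperCentralSeries G m' with hW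
      have hWn : W.Normal := ucsNormal G m'
      let π : G →* G ⧸ W := QuotientGroup.mk' W
      have hker : ∀ w : G, w ∈ W → π w = 1 := fun w hw => (QuotientGroup.eq_one_iff w).mpr hw
      have hcen : ∀ q : G ⧸ W, Commute ⁅π y, π a⁆ q := by
        intro q
        obtain ⟨g, rfl⟩ := QuotientGroup.mk'_surjective W q
        rw [← map_commutatorElement]
        have hstep : ⁅y, a⁆ * g * ⁅y, a⁆⁻¹ * g⁻¹ ∈ W :=
          mem_upperCentralSeries_succ_iff.mp hc g
        have : π (⁅y, a⁆ * g) = π (g * ⁅y, a⁆) := by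
          have hdecomp : ⁅y, a⁆ * g = (⁅y, a⁆ * g * ⁅y, a⁆⁻¹ * g⁻¹) * (g * ⁅y, a⁆) := by
            group
          rw [hdecomp, map_mul, hker _ hstep, one_mul]
        unfold Commute SemiconjBy
        rw [← map_mul, ← map_mul, this]
      have hq : π ⁅y ^ p, a⁆ = 1 := by
        rw [map_commutatorElement, map_pow, comm_pow_central _ _ hcen,
          ← comm_pow_central' _ _ hcen, ← map_pow, hexp a ha, map_one,
          commutatorElement_one_right]
      have hmem : ⁅y ^ p, a⁆ ∈ W := (QuotientGroup.eq_one_iff _).mp hq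
      have hidx : n - (j + 1) - (k + 1) = m' := by omega
      rw [hidx]
      exact hmem

lemma itCom_mono {A B : Subgroup G} (h : A ≤ B) (k : ℕ) : itCom A k ≤ itCom B k := by
  induction k with
  | zero => exact h
  | succ k ih => exact Subgroup.commutator_mono ih le_rfl

lemma itCom_ucs_le (m k : ℕ) :
    itCom (upperCentralSeries G m) k ≤ upperCentralSeries G (m - k) := by
  induction k with
  | zero => simp [itCom]
  | succ k ih =>
    show ⁅itCom (upperCentralSeries G m) k, (⊤ : Subgroup G)⁆ ≤ _
    have h1 : ⁅itCom (upperCentralSeries G m) k, (⊤ : Subgroup G)⁆ ≤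
        ⁅upperCentralSeries G (m - k), (⊤ : Subgroup G)⁆ :=
      Subgroup.commutator_mono ih le_rfl
    refine h1.trans ?_
    rw [Subgroup.commutator_le]
    intro x hx g _
    have := ucs_comm hx g
    have hle : upperCentralSeries G (m - k - 1) ≤ upperCentralSeries G (m - (k + 1)) := by
      apply upperCentralSeries_mono
      omega
    exact hle this

end Aux

theorem stmt_16 {p : ℕ} (hp : p.Prime) {G : Type*} [Group G] (n : ℕ)
    (N : Subgroup G) (hN : N.Normal) (hNZ : N ≤ upperCentralSeries G n)
    (hexp : ∀ x ∈ N, x ^ p = 1) :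
    (∀ i, 1 ≤ i → i ≤ n → itCom ⁅lam p G i, N⁆ (n - i) = ⊥) ∧ itCom N n = ⊥ := by
  constructor
  · intro i h1 hi
    -- key containment : ⁅lam p G i, N⁆ ≤ Z_{n-i}
    have hkey : ⁅lam p G i, N⁆ ≤ upperCentralSeries G (n - i) := by
      have hlam : lam p G i ≤
          commInto N (upperCentralSeries G (n - i)) (ucsNormal G _) := by
        apply iSup_le
        intro j
        apply iSup_le
        intro hj
        rw [Finset.mem_Icc] at hj
        apply (Subgroup.closure_le _).mpr
        rintro _ ⟨x, hx, rfl⟩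
        rw [SetLike.mem_coe, mem_commInto]
        intro a ha
        have := pow_comm_lemma n N hNZ hexp (i - j) (j - 1) x hx a ha
        have hidx : n - (j - 1 + 1) - (i - j) = n - i := by omega
        rwa [hidx] at this
      rw [Subgroup.commutator_le]
      intro g hg a ha
      exact (hlam hg) a ha
    have h2 : itCom ⁅lam p G i, N⁆ (n - i) ≤ upperCentralSeries G 0 := by
      have := (itCom_mono hkey (n - i)).trans (itCom_ucs_le (n - i) (n - i))
      simpa using this
    rw [show upperCentralSeries G 0 = ⊥ from rfl] at h2
    exact le_bot_iff.mp h2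
  · have h2 : itCom N n ≤ upperCentralSeries G 0 := by
      have := (itCom_mono hNZ n).trans (itCom_ucs_le n n)
      simpa using this
    rw [show upperCentralSeries G 0 = ⊥ from rfl] at h2
    exact le_bot_iff.mp h2
end
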